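/- Let α ∈ (1/2, 1], r ∈ (1/(2α), 1), δ ∈ (0,1), and C > 0. Let Y be a finite subset of the unit ball B_n ⊆ ℝⁿ with |Y| < δ(2rα)ⁿ/C, and let x be a random point from a distribution on the unit ball whose density ρ satisfies ρ(z) ≤ C/(rⁿ · Vol(B_n)) for all z. Then with probability greater than 1 − δ, the point x is Fisher-separable from Y with threshold α, i.e., α⟨x,x⟩ > ⟨x,y⟩ for all y ∈ Y. -/

import Mathlib

open MeasureTheory ProbabilityTheory Real
open scoped RealInnerProductSpace ENNReal NNReal

set_option maxHeartbeats 1000000 in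
theorem stmt_0 (n : ℕ) (α r δ C : ℝ) (hα : 1/2 < α) (hα1 : α ≤ 1)
    (hr1 : 1/(2*α) < r) (hr2 : r < 1) (hδ0 : 0 < δ) (hδ1 : δ < 1) (hC : 0 < C)
    (Y : Finset (EuclideanSpace ℝ (Fin n))) (hY : ∀ y ∈ Y, ‖y‖ ≤ 1)
    (hYcard : (Y.card : ℝ) < δ * (2*r*α)^n / C)
    (ρ : EuclideanSpace ℝ (Fin n) → ℝ≥0∞)
    (hρ : ∀ z, ρ z ≤ ENNReal.ofReal
      (C / (r^n * (volume (Metric.closedBall (0 : EuclideanSpace ℝ (Fin n)) 1)).toReal)))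
    (hsupp : ∀ z : EuclideanSpace ℝ (Fin n), 1 < ‖z‖ → ρ z = 0)
    (hprob : IsProbabilityMeasure (volume.withDensity ρ)) :
    (volume.withDensity ρ) {x | ∀ y ∈ Y, α * ⟪x, x⟫ > ⟪x, y⟫} > ENNReal.ofReal (1 - δ) := by
  have hα0 : 0 < α := lt_trans (by norm_num) hα
  have hr0 : 0 < r := lt_trans (by positivity) hr1
  set μ := volume.withDensity ρ with hμ
  set Vb := volume (Metric.closedBall (0 : EuclideanSpace ℝ (Fin n)) 1) with hVb
  have hVfin : Vb ≠ ⊤ := (measure_closedBall_lt_top).ne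
  have hVpos : 0 < Vb := Metric.measure_closedBall_pos volume 0 one_pos
  set V := Vb.toReal with hV
  have hV0 : 0 < V := ENNReal.toReal_pos hVpos.ne' hVfin
  set c := ENNReal.ofReal (C / (r^n * V)) with hc
  -- bound on the measure of each bad set
  have hball : ∀ y ∈ Y, μ {x : EuclideanSpace ℝ (Fin n) | ⟪x, y⟫ ≥ α * ⟪x, x⟫}
      ≤ ENNReal.ofReal (C / (2*r*α)^n) := by
    intro y hy
    set z : EuclideanSpace ℝ (Fin n) := (2*α)⁻¹ • y with hz
    have hsub : {x : EuclideanSpace ℝ (Fin n) | ⟪x, y⟫ ≥ α * ⟪x, x⟫}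
        ⊆ Metric.closedBall z (1/(2*α)) := by
      intro x hx
      simp only [Set.mem_setOf_eq] at hx
      have hxz : ‖x - z‖^2 ≤ (1/(2*α))^2 := by
        have h1 : ‖x - z‖^2 = ‖x‖^2 - 2 * ⟪x, z⟫ + ‖z‖^2 := norm_sub_sq_real x z
        have h2 : ⟪x, z⟫ = (2*α)⁻¹ * ⟪x, y⟫ := real_inner_smul_right x y _
        have h3 : ⟪x, x⟫ = ‖x‖^2 := real_inner_self_eq_norm_sq x
        have h4 : ‖z‖ = (2*α)⁻¹ * ‖y‖ := by
          rw [hz, norm_smul, Real.norm_eq_abs, abs_of_pos (by positivity : (0:ℝ) < (2*α)⁻¹)]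
        have hy1 : ‖y‖ ≤ 1 := hY y hy
        have hyn : 0 ≤ ‖y‖ := norm_nonneg y
        have h5 : α * ‖x‖^2 ≤ ⟪x, y⟫ := by rw [← h3]; exact hx
        rw [h1, h2, h4, one_div]
        have hinv : 0 < (2*α)⁻¹ := by positivity
        have hid : (2*α)⁻¹ * α = 1/2 := by field_simp
        have key : ‖x‖^2 ≤ 2 * ((2*α)⁻¹ * ⟪x, y⟫) := by
          have := mul_le_mul_of_nonneg_left h5 hinv.le
          nlinarith
        have hy2 : ((2*α)⁻¹ * ‖y‖)^2 ≤ ((2*α)⁻¹)^2 := by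
          have h6 : ‖y‖^2 ≤ 1 := by nlinarith
          calc ((2*α)⁻¹ * ‖y‖)^2 = ((2*α)⁻¹)^2 * ‖y‖^2 := by ring
            _ ≤ ((2*α)⁻¹)^2 * 1 := by nlinarith [sq_nonneg ((2*α)⁻¹)]
            _ = ((2*α)⁻¹)^2 := mul_one _
        linarith
      have hnn : 0 ≤ ‖x - z‖ := norm_nonneg _
      have hb : (0:ℝ) ≤ 1/(2*α) := by positivity
      have : ‖x - z‖ ≤ 1/(2*α) := by nlinarith
      simpa [Metric.mem_closedBall, dist_eq_norm] using this
    have h1 : μ {x : EuclideanSpace ℝ (Fin n) | ⟪x, y⟫ ≥ α * ⟪x, x⟫}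
        ≤ μ (Metric.closedBall z (1/(2*α))) := measure_mono hsub
    have hmb : MeasurableSet (Metric.closedBall z (1/(2*α))) :=
      measurableSet_closedBall
    have h2 : μ (Metric.closedBall z (1/(2*α))) = ∫⁻ x in Metric.closedBall z (1/(2*α)), ρ x :=
      withDensity_apply ρ hmb
    have h3 : (∫⁻ x in Metric.closedBall z (1/(2*α)), ρ x)
        ≤ ∫⁻ _ in Metric.closedBall z (1/(2*α)), c := by
      refine setLIntegral_mono measurable_const (fun x _ => ?_)
      exact hρ x
    have h4 : (∫⁻ _ in Metric.closedBall z (1/(2*α)), c)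
        = c * volume (Metric.closedBall z (1/(2*α))) := setLIntegral_const _ _
    have h5 : volume (Metric.closedBall z (1/(2*α)))
        = ENNReal.ofReal ((1/(2*α))^n) * Vb := by
      rw [hVb, Measure.addHaar_closedBall' volume z (by positivity : (0:ℝ) ≤ 1/(2*α)),
        finrank_euclideanSpace_fin]
    have h6 : c * (ENNReal.ofReal ((1/(2*α))^n) * Vb) = ENNReal.ofReal (C / (2*r*α)^n) := by
      rw [hc, show Vb = ENNReal.ofReal V from (ENNReal.ofReal_toReal hVfin).symm,
        ← ENNReal.ofReal_mul (by positivity), ← ENNReal.ofReal_mul (by positivity)]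
      congr 1
      have hrn : (0:ℝ) < r^n := by positivity
      have hpow : (1/(2*α))^n * (2*r*α)^n = r^n := by
        rw [← mul_pow]
        congr 1
        field_simp
      rw [div_mul_eq_mul_div, div_eq_div_iff (by positivity) (by positivity)]
      linear_combination C * V * hpow
    calc μ {x : EuclideanSpace ℝ (Fin n) | ⟪x, y⟫ ≥ α * ⟪x, x⟫}
        ≤ c * volume (Metric.closedBall z (1/(2*α))) := by
          rw [← h4]; exact h1.trans (h2.le.trans h3)
      _ = ENNReal.ofReal (C / (2*r*α)^n) := by rw [h5, h6]
  -- union bound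
  set bad := ⋃ y ∈ Y, {x : EuclideanSpace ℝ (Fin n) | ⟪x, y⟫ ≥ α * ⟪x, x⟫} with hbad
  have hbadle : μ bad < ENNReal.ofReal δ := by
    have h1 : μ bad ≤ ∑ y ∈ Y, μ {x : EuclideanSpace ℝ (Fin n) | ⟪x, y⟫ ≥ α * ⟪x, x⟫} :=
      measure_biUnion_finset_le Y _
    have h2 : (∑ y ∈ Y, μ {x : EuclideanSpace ℝ (Fin n) | ⟪x, y⟫ ≥ α * ⟪x, x⟫})
        ≤ Y.card * ENNReal.ofReal (C / (2*r*α)^n) := by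
      calc _ ≤ ∑ _y ∈ Y, ENNReal.ofReal (C / (2*r*α)^n) := Finset.sum_le_sum hball
        _ = Y.card * ENNReal.ofReal (C / (2*r*α)^n) := by
            rw [Finset.sum_const, nsmul_eq_mul]
    have h3 : (Y.card : ℝ≥0∞) * ENNReal.ofReal (C / (2*r*α)^n)
        < ENNReal.ofReal δ := by
      rw [← ENNReal.ofReal_natCast, ← ENNReal.ofReal_mul (by positivity)]
      apply (ENNReal.ofReal_lt_ofReal_iff hδ0).mpr
      have hP : (0:ℝ) < (2*r*α)^n := by positivity
      have h5 : (Y.card:ℝ) * C < δ * (2*r*α)^n := (lt_div_iff₀ hC).mp hYcard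
      have heq : (Y.card:ℝ) * (C / (2*r*α)^n) = (Y.card * C) / (2*r*α)^n := by ring
      rw [heq, div_lt_iff₀ hP]
      linarith
    exact lt_of_le_of_lt (h1.trans h2) h3
  -- conclusion
  have hcover : (Set.univ : Set (EuclideanSpace ℝ (Fin n)))
      ⊆ {x | ∀ y ∈ Y, α * ⟪x, x⟫ > ⟪x, y⟫} ∪ bad := by
    intro x _
    by_cases h : ∀ y ∈ Y, α * ⟪x, x⟫ > ⟪x, y⟫
    · exact Or.inl h
    · right
      push_neg at h
      obtain ⟨y, hy, hle⟩ := h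
      exact Set.mem_biUnion hy hle
  have huniv : μ Set.univ = 1 := measure_univ
  by_contra hcon
  push_neg at hcon
  have h1 : (1 : ℝ≥0∞) ≤ μ {x | ∀ y ∈ Y, α * ⟪x, x⟫ > ⟪x, y⟫} + μ bad := by
    rw [← huniv]
    exact (measure_mono hcover).trans (measure_union_le _ _)
  have h2 : μ {x | ∀ y ∈ Y, α * ⟪x, x⟫ > ⟪x, y⟫} + μ bad
      < ENNReal.ofReal (1 - δ) + ENNReal.ofReal δ :=
    ENNReal.add_lt_add_of_le_of_lt (by finiteness) hcon hbadle
  rw [← ENNReal.ofReal_add (by linarith) (by linarith)] at h2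
  simp only [sub_add_cancel, ENNReal.ofReal_one] at h2
  exact absurd (h1.trans_lt h2) (lt_irrefl _)
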